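/- Let R be a ring in which every idempotent is central and which is a principal ideal ring (every right ideal and every left ideal of R is generated by a single element). Then R is endoartinian (both left and right endoartinian) if and only if there exist n ∈ ℕ and rings R_1, …, R_n, each of which is an artinian uniserial ring, such that R is isomorphic as a ring to the product R_1 × ⋯ × R_n. -/

import Mathlib

/-- A module `M` over a ring `S` is *endoartinian* if every descending chain of images of
module endomorphisms of `M` stabilizes.  (A right `R`-module is treated as a module over
`Rᵐᵒᵖ`; a left `R`-module is a module over `R` itself.) -/
def IsEndoartinian (S M : Type*) [Ring S] [AddCommGroup M] [Module S M] : Prop :=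
  ∀ f : ℕ → M →ₗ[S] M,
    (∀ n, LinearMap.range (f (n + 1)) ≤ LinearMap.range (f n)) →
    ∃ n, ∀ k, n ≤ k → LinearMap.range (f k) = LinearMap.range (f n)

open LinearMap Submodule MulOpposite

section Toolkit

/-- `op` as a linear equivalence from `T` as a right `T`-module to `Tᵐᵒᵖ` as a left
`Tᵐᵒᵖ`-module. -/
def opLE (T : Type*) [Ring T] : T ≃ₗ[Tᵐᵒᵖ] Tᵐᵒᵖ :=
  { MulOpposite.opAddEquiv with
    map_smul' := fun _ _ => rfl }

theorem isEndoartinian_of_isArtinian (S M : Type*) [Ring S] [AddCommGroup M] [Module S M]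
    [IsArtinian S M] : IsEndoartinian S M := by
  intro f hf
  have hmono : ∀ m n : ℕ, m ≤ n → LinearMap.range (f n) ≤ LinearMap.range (f m) := by
    intro m n h
    induction n, h using Nat.le_induction with
    | base => exact le_rfl
    | succ n hmn ih => exact (hf n).trans ih
  obtain ⟨n, hn⟩ := IsArtinian.monotone_stabilizes (R := S) (M := M)
    ⟨fun n => OrderDual.toDual (LinearMap.range (f n)), fun a b hab => hmono a b hab⟩
  exact ⟨n, fun k hk => (OrderDual.toDual.injective (hn k hk)).symm⟩

theorem isEndoartinian_congr {S M N : Type*} [Ring S] [AddCommGroup M] [AddCommGroup N]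
    [Module S M] [Module S N] (e : M ≃ₗ[S] N) (h : IsEndoartinian S M) :
    IsEndoartinian S N := by
  intro f hf
  set g : ℕ → M →ₗ[S] M := fun n => (e.symm.toLinearMap.comp (f n)).comp e.toLinearMap with hg
  have hr : ∀ n, LinearMap.range (g n) = Submodule.map e.symm.toLinearMap
      (LinearMap.range (f n)) := by
    intro n
    rw [hg]
    simp only [LinearMap.range_comp, LinearEquiv.range, Submodule.map_top]
  have hinj : Function.Injective (Submodule.map e.symm.toLinearMap :
      Submodule S N → Submodule S M) := Submodule.map_injective_of_injective e.symm.injective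
  obtain ⟨n, hn⟩ := h g (fun n => by
    rw [hr, hr]; exact Submodule.map_mono (hf n))
  refine ⟨n, fun k hk => hinj ?_⟩
  rw [← hr, ← hr, hn k hk]

theorem isArtinian_of_isEndoartinian {T : Type*} [Ring T] (h : IsEndoartinian T T)
    (hP : ∀ I : Submodule T T, ∃ a, I = Submodule.span T {a}) : IsArtinian T T := by
  rw [← monotone_stabilizes_iff_artinian]
  intro f
  choose a ha using fun n => hP (OrderDual.ofDual (f n))
  have hrange : ∀ n, LinearMap.range (LinearMap.toSpanSingleton T T (a n)) =
      OrderDual.ofDual (f n) := by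
    intro n
    rw [← LinearMap.span_singleton_eq_range, ← ha n]
  obtain ⟨n, hn⟩ := h (fun n => LinearMap.toSpanSingleton T T (a n)) (fun n => by
    rw [hrange, hrange]; exact f.monotone (Nat.le_succ n))
  refine ⟨n, fun m hm => ?_⟩
  have := hn m hm
  rw [hrange, hrange] at this
  exact OrderDual.ofDual.injective this.symm

theorem pir_congr {S M N : Type*} [Ring S] [AddCommGroup M] [AddCommGroup N]
    [Module S M] [Module S N] (e : M ≃ₗ[S] N)
    (hP : ∀ I : Submodule S M, ∃ a, I = Submodule.span S {a}) :
    ∀ J : Submodule S N, ∃ b, J = Submodule.span S {b} := by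
  intro J
  obtain ⟨a, ha⟩ := hP (Submodule.comap e.toLinearMap J)
  refine ⟨e a, ?_⟩
  have h1 : Submodule.map e.toLinearMap (Submodule.comap e.toLinearMap J) = J :=
    Submodule.map_comap_eq_of_surjective e.surjective J
  rw [← h1, ha, Submodule.map_span, Set.image_singleton]
  rfl

theorem pir_of_surjective {T U : Type*} [Ring T] [Ring U] (f : T →+* U)
    (hf : Function.Surjective f)
    (hP : ∀ I : Submodule T T, ∃ a, I = Submodule.span T {a}) :
    ∀ I : Submodule U U, ∃ a, I = Submodule.span U {a} := by
  intro I
  set c : Submodule T T :=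
    { carrier := f ⁻¹' I
      zero_mem' := by simp only [Set.mem_preimage, map_zero]; exact I.zero_mem
      add_mem' := fun ha hb => by
        simp only [Set.mem_preimage, map_add] at *
        exact I.add_mem ha hb
      smul_mem' := fun r x hx => by
        simp only [Set.mem_preimage, smul_eq_mul, map_mul] at *
        exact I.smul_mem (f r) hx } with hc
  obtain ⟨a, ha⟩ := hP c
  have haI : f a ∈ I := by
    have : a ∈ c := ha ▸ Submodule.mem_span_singleton_self a
    exact this
  refine ⟨f a, le_antisymm ?_ (Submodule.span_le.mpr (Set.singleton_subset_iff.mpr haI))⟩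
  intro x hx
  obtain ⟨y, rfl⟩ := hf x
  have hy : y ∈ c := hx
  rw [ha] at hy
  obtain ⟨t, ht⟩ := Submodule.mem_span_singleton.mp hy
  rw [smul_eq_mul] at ht
  exact Submodule.mem_span_singleton.mpr ⟨f t, by rw [smul_eq_mul, ← map_mul, ht]⟩

theorem op_hom_surjective {T U : Type*} [Ring T] [Ring U] (f : T →+* U)
    (hf : Function.Surjective f) : Function.Surjective (RingHom.op f) := by
  intro y
  obtain ⟨x, hx⟩ := hf (unop y)
  exact ⟨op x, unop_injective hx⟩

theorem pow_toSpanSingleton {T : Type*} [Ring T] (a : T) (k : ℕ) (x : T) :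
    ((LinearMap.toSpanSingleton T T a) ^ k) x = x * a ^ k := by
  induction k generalizing x with
  | zero => simp
  | succ k ih =>
    rw [pow_succ, Module.End.mul_apply, LinearMap.toSpanSingleton_apply,
      smul_eq_mul, ih (x * a), mul_assoc, ← pow_succ']

theorem isUnit_or_isNilpotent {T : Type*} [Ring T] [Nontrivial T] [IsArtinian T T]
    [IsNoetherian T T] (htriv : ∀ e : T, e * e = e → e = 0 ∨ e = 1) (a : T) :
    IsUnit a ∨ IsNilpotent a := by
  set f : T →ₗ[T] T := LinearMap.toSpanSingleton T T a with hfdef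
  obtain ⟨N, hN⟩ := Filter.eventually_atTop.mp (f.eventually_isCompl_ker_pow_range_pow)
  set n := max N 1 with hn
  have hcompl : IsCompl (LinearMap.range (f ^ n)) (LinearMap.ker (f ^ n)) :=
    (hN n (le_max_left _ _)).symm
  set π : T →ₗ[T] T := (LinearMap.range (f ^ n)).subtype.comp
    (Submodule.projectionOnto _ _ hcompl) with hπ
  have hπ1 : ∀ x : T, π x = x * π 1 := by
    intro x
    conv_lhs => rw [← mul_one x, ← smul_eq_mul, map_smul]
    rw [smul_eq_mul]
  have hfix : ∀ y ∈ LinearMap.range (f ^ n), π y = y := by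
    intro y hy
    rw [hπ]
    simp only [LinearMap.comp_apply]
    rw [show y = ((⟨y, hy⟩ : LinearMap.range (f ^ n)) : T) from rfl,
      Submodule.linearProjOfIsCompl_apply_left]
    rfl
  have hker : ∀ y ∈ LinearMap.ker (f ^ n), π y = 0 := by
    intro y hy
    rw [hπ]
    simp only [LinearMap.comp_apply]
    rw [Submodule.linearProjOfIsCompl_apply_right hcompl ⟨y, hy⟩]
    rfl
  set c := π 1 with hc
  have hcmem : c ∈ LinearMap.range (f ^ n) := by
    rw [hc, hπ]; exact Submodule.coe_mem _
  have hcc : c * c = c := by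
    have h1 : π c = c * c := by rw [hπ1 c]
    have h2 : π c = c := hfix c hcmem
    rw [← h1, h2]
  rcases htriv c hcc with h0 | h1
  · right
    refine ⟨n, ?_⟩
    have : a ^ n ∈ LinearMap.range (f ^ n) :=
      ⟨1, by rw [pow_toSpanSingleton, one_mul]⟩
    have := hfix _ this
    rw [hπ1, h0, mul_zero] at this
    exact this.symm
  · left
    have hid : ∀ x : T, π x = x := fun x => by rw [hπ1, h1, mul_one]
    have hsurj : ∀ y : T, ∃ x, x * a ^ n = y := by
      intro y
      have : y ∈ LinearMap.range (f ^ n) := by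
        rw [← hid y, hπ]; exact Submodule.coe_mem _
      obtain ⟨x, hx⟩ := this
      exact ⟨x, by rw [← pow_toSpanSingleton a n x]; exact hx⟩
    have hinj : ∀ x : T, x * a = 0 → x = 0 := by
      intro x hx
      have hker' : x ∈ LinearMap.ker (f ^ n) := by
        rw [LinearMap.mem_ker, pow_toSpanSingleton]
        obtain ⟨m, hm⟩ : ∃ m, n = m + 1 := ⟨n - 1, by omega⟩
        rw [hm, pow_succ', ← mul_assoc, hx, zero_mul]
      have := hker x hker'
      rw [hid x] at this
      exact this
    obtain ⟨b, hb⟩ := hsurj 1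
    obtain ⟨m, hm⟩ : ∃ m, n = m + 1 := ⟨n - 1, by omega⟩
    have hwa : (b * a ^ m) * a = 1 := by
      rw [mul_assoc, ← pow_succ, ← hm, hb]
    have haw : a * (b * a ^ m) = 1 := by
      have h0 : (a * (b * a ^ m) - 1) * a = 0 := by
        rw [sub_mul, one_mul, mul_assoc, hwa, mul_one, sub_self]
      exact sub_eq_zero.mp (hinj _ h0)
    exact ⟨⟨a, b * a ^ m, haw, hwa⟩, rfl⟩

theorem uniserial_of_artinian_pir {T : Type*} [Ring T]
    (htriv : ∀ e : T, e * e = e → e = 0 ∨ e = 1)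
    (hart : IsArtinian T T) (hP : ∀ I : Submodule T T, ∃ a, I = Submodule.span T {a})
    (I J : Submodule T T) : I ≤ J ∨ J ≤ I := by
  classical
  rcases subsingleton_or_nontrivial T with hsub | hnt
  · left
    intro x _
    have : x = 0 := Subsingleton.elim x 0
    rw [this]; exact J.zero_mem
  · haveI := hart
    haveI : IsNoetherian T T := isNoetherian_def.mpr fun s => by
      obtain ⟨a, ha⟩ := hP s
      rw [ha]; exact Submodule.fg_span_singleton a
    have uon : ∀ x : T, IsUnit x ∨ IsNilpotent x := isUnit_or_isNilpotent htriv
    have hnu : ∀ x : T, IsNilpotent x → ¬ IsUnit x := by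
      rintro x ⟨k, hk⟩ hu
      have := hu.pow k
      rw [hk, isUnit_zero_iff] at this
      exact one_ne_zero this.symm
    set M : Submodule T T :=
      { carrier := {x | ¬ IsUnit x}
        zero_mem' := not_isUnit_zero
        add_mem' := by
          intro a b ha hb hu
          obtain ⟨u, hu'⟩ := hu
          have hua : ¬ IsUnit ((↑u⁻¹ : T) * a) := by
            intro h
            exact ha (by
              have := u.isUnit.mul h
              rwa [← mul_assoc, Units.mul_inv, one_mul] at this)
          have hub : ¬ IsUnit ((↑u⁻¹ : T) * b) := by
            intro h
            exact hb (by
              have := u.isUnit.mul h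
              rwa [← mul_assoc, Units.mul_inv, one_mul] at this)
          have hnb : IsNilpotent ((↑u⁻¹ : T) * b) := (uon _).resolve_left hub
          have h1 : (↑u⁻¹ : T) * a = 1 - (↑u⁻¹ : T) * b := by
            have h2 : (↑u⁻¹ : T) * a + (↑u⁻¹ : T) * b = 1 := by
              rw [← mul_add, ← hu', Units.inv_mul]
            exact eq_sub_of_add_eq h2
          exact hua (h1 ▸ hnb.isUnit_one_sub)
        smul_mem' := by
          intro r x hx hu
          obtain ⟨v, hv⟩ := hu
          obtain ⟨k, hk⟩ : IsNilpotent x := (uon x).resolve_left hx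
          have hv' : (↑v : T) = r * x := by rw [hv, smul_eq_mul]
          have hw : ((↑v⁻¹ : T) * r) * x = 1 := by
            rw [mul_assoc, ← hv', Units.inv_mul]
          have hj : ∀ j : ℕ, ((↑v⁻¹ : T) * r) ^ j * x ^ j = 1 := by
            intro j
            induction j with
            | zero => simp
            | succ j ih =>
              rw [pow_succ, pow_succ', mul_assoc, ← mul_assoc ((↑v⁻¹ : T) * r) x (x ^ j),
                hw, one_mul]
              exact ih
          have := hj k
          rw [hk, mul_zero] at this
          exact one_ne_zero this.symm } with hMdef
    obtain ⟨m, hm⟩ := hP M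
    have hmM : ¬ IsUnit m := by
      have : m ∈ M := hm ▸ Submodule.mem_span_singleton_self m
      exact this
    obtain ⟨Nn, hNn⟩ : IsNilpotent m := (uon m).resolve_left hmM
    have key : ∀ K : Submodule T T, ∃ k : ℕ, K = Submodule.span T {m ^ k} := by
      intro K
      by_cases htop : K ≤ Submodule.span T {m ^ Nn}
      · refine ⟨Nn, le_antisymm ?_ ?_⟩
        · exact htop
        · rw [hNn, Submodule.span_zero_singleton]
          exact bot_le
      · set P : ℕ → Prop := fun k => K ≤ Submodule.span T {m ^ k} with hPdef
        have hP0 : P 0 := by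
          rw [hPdef]
          simp only [pow_zero]
          intro x _
          exact Submodule.mem_span_singleton.mpr ⟨x, by rw [smul_eq_mul, mul_one]⟩
        set k := Nat.findGreatest P Nn with hkdef
        have hk : P k := Nat.findGreatest_spec (Nat.zero_le Nn) hP0
        have hkN : k ≤ Nn := Nat.findGreatest_le Nn
        have hklt : k < Nn := lt_of_le_of_ne hkN (by
          intro h
          exact htop (h ▸ hk))
        have hnk1 : ¬ P (k + 1) :=
          Nat.findGreatest_is_greatest (Nat.lt_succ_self k) (by omega)
        rw [hPdef] at hnk1
        obtain ⟨x, hxK, hxns⟩ := SetLike.not_le_iff_exists.mp hnk1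
        have hxk : x ∈ Submodule.span T {m ^ k} := hk hxK
        obtain ⟨t, ht⟩ := Submodule.mem_span_singleton.mp hxk
        rw [smul_eq_mul] at ht
        have htu : IsUnit t := by
          by_contra htu
          have : t ∈ M := htu
          rw [hm] at this
          obtain ⟨s, hs⟩ := Submodule.mem_span_singleton.mp this
          rw [smul_eq_mul] at hs
          apply hxns
          rw [← ht, ← hs, mul_assoc, ← pow_succ']
          exact Submodule.mem_span_singleton.mpr ⟨s, by rw [smul_eq_mul]⟩
        obtain ⟨u, hu⟩ := htu
        have hmk : m ^ k ∈ K := by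
          have : (↑u⁻¹ : T) • x ∈ K := K.smul_mem _ hxK
          rwa [smul_eq_mul, ← ht, ← mul_assoc, ← hu, Units.inv_mul, one_mul] at this
        exact ⟨k, le_antisymm hk (Submodule.span_le.mpr (Set.singleton_subset_iff.mpr hmk))⟩
    obtain ⟨j, hj⟩ := key I
    obtain ⟨k, hk⟩ := key J
    rcases le_total j k with h | h
    · right
      rw [hj, hk]
      apply Submodule.span_le.mpr
      apply Set.singleton_subset_iff.mpr
      obtain ⟨d, hd⟩ : ∃ d, k = d + j := ⟨k - j, by omega⟩
      rw [hd, pow_add]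
      exact Submodule.mem_span_singleton.mpr ⟨m ^ d, by rw [smul_eq_mul]⟩
    · left
      rw [hj, hk]
      apply Submodule.span_le.mpr
      apply Set.singleton_subset_iff.mpr
      obtain ⟨d, hd⟩ : ∃ d, j = d + k := ⟨j - k, by omega⟩
      rw [hd, pow_add]
      exact Submodule.mem_span_singleton.mpr ⟨m ^ d, by rw [smul_eq_mul]⟩

variable {R : Type} [Ring R]

theorem central_idem_mul (e : R) (he : e * e = e) (hc : ∀ r : R, e * r = r * e)
    (p q : R) : e * (p * q) = (e * p) * (e * q) :=
  calc e * (p * q) = (e * e) * (p * q) := by rw [he]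
    _ = e * ((e * p) * q) := by rw [mul_assoc, ← mul_assoc e p q]
    _ = e * ((p * e) * q) := by rw [hc p]
    _ = (e * p) * (e * q) := by rw [mul_assoc p e q, ← mul_assoc]

/-- The ring congruence `x ~ y ↔ e * x = e * y` for a central idempotent `e`. -/
def conOf (e : R) (he : e * e = e) (hc : ∀ r : R, e * r = r * e) : RingCon R where
  r x y := e * x = e * y
  iseqv := ⟨fun _ => rfl, Eq.symm, Eq.trans⟩
  add' {w x y z} h1 h2 := by
    show e * (w + y) = e * (x + z)
    have h1' : e * w = e * x := h1
    have h2' : e * y = e * z := h2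
    rw [mul_add, mul_add, h1', h2']
  mul' {w x y z} h1 h2 := by
    show e * (w * y) = e * (x * z)
    have h1' : e * w = e * x := h1
    have h2' : e * y = e * z := h2
    rw [central_idem_mul e he hc, central_idem_mul e he hc, h1', h2']

theorem conOf_mk'_surjective (e : R) (he : e * e = e) (hc : ∀ r : R, e * r = r * e) :
    Function.Surjective ((conOf e he hc).mk') := fun q =>
  Quot.inductionOn q fun x => ⟨x, rfl⟩

theorem conOf_eq (e : R) (he : e * e = e) (hc : ∀ r : R, e * r = r * e) (x y : R) :
    (conOf e he hc).mk' x = (conOf e he hc).mk' y ↔ e * x = e * y :=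
  RingCon.eq _

theorem exists_primitive_decomposition [IsArtinian R R]
    (hcentral : ∀ e : R, e * e = e → ∀ r : R, e * r = r * e) :
    ∀ e : R, e * e = e →
      ∃ (n : ℕ) (v : Fin n → R),
        (∀ i, v i * v i = v i) ∧
        (∀ i, ∀ g : R, g * g = g → v i * g = g → g = 0 ∨ g = v i) ∧
        (∀ i j, i ≠ j → v i * v j = 0) ∧
        (∑ i, v i) = e := by
  have H : ∀ I : Submodule R R, ∀ e : R, e * e = e → Submodule.span R {e} = I →
      ∃ (n : ℕ) (v : Fin n → R),
        (∀ i, v i * v i = v i) ∧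
        (∀ i, ∀ g : R, g * g = g → v i * g = g → g = 0 ∨ g = v i) ∧
        (∀ i j, i ≠ j → v i * v j = 0) ∧
        (∑ i, v i) = e := by
    intro I
    induction I using WellFoundedLT.induction with
    | _ I IH =>
      intro e he hspan
      subst hspan
      by_cases hprim : ∀ g : R, g * g = g → e * g = g → g = 0 ∨ g = e
      · refine ⟨1, fun _ => e, fun _ => he, fun _ => hprim, ?_, ?_⟩
        · intro i j hij
          exact absurd (Subsingleton.elim i j) hij
        · simp
      · push_neg at hprim
        obtain ⟨g, hg, heg, hgne⟩ := hprim
        obtain ⟨hg0, hge⟩ : g ≠ 0 ∧ g ≠ e := hgne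
        have hcg := hcentral g hg
        have hge' : g * e = g := by rw [hcg e, heg]
        have hgsub : Submodule.span R {g} < Submodule.span R {e} := by
          refine lt_of_le_of_ne ?_ ?_
          · apply Submodule.span_le.mpr
            apply Set.singleton_subset_iff.mpr
            exact Submodule.mem_span_singleton.mpr ⟨g, by rw [smul_eq_mul, hge']⟩
          · intro hEq
            have : e ∈ Submodule.span R {g} := hEq ▸ Submodule.mem_span_singleton_self e
            obtain ⟨t, ht⟩ := Submodule.mem_span_singleton.mp this
            rw [smul_eq_mul] at ht
            have : e * g = e := by rw [← ht, mul_assoc, hg]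
            rw [heg] at this
            exact hge this
        have hfe : (e - g) * (e - g) = e - g := by
          rw [sub_mul, mul_sub, mul_sub, he, heg, hge', hg]
          abel
        have hfsub : Submodule.span R {e - g} < Submodule.span R {e} := by
          refine lt_of_le_of_ne ?_ ?_
          · apply Submodule.span_le.mpr
            apply Set.singleton_subset_iff.mpr
            refine Submodule.mem_span_singleton.mpr ⟨e - g, ?_⟩
            rw [smul_eq_mul, sub_mul, he, hge']
          · intro hEq
            have hmem : e ∈ Submodule.span R {e - g} := hEq ▸ Submodule.mem_span_singleton_self e
            obtain ⟨t, ht⟩ := Submodule.mem_span_singleton.mp hmem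
            rw [smul_eq_mul] at ht
            have hgeg : g * (e - g) = 0 := by rw [mul_sub, hge', hg, sub_self]
            have : g = 0 := by
              calc g = g * e := hge'.symm
                _ = g * (t * (e - g)) := by rw [ht]
                _ = (g * t) * (e - g) := by rw [mul_assoc]
                _ = (t * g) * (e - g) := by rw [hcg t]
                _ = t * (g * (e - g)) := by rw [mul_assoc]
                _ = 0 := by rw [hgeg, mul_zero]
            exact hg0 this
        obtain ⟨n₁, v₁, hi₁, hp₁, ho₁, hs₁⟩ := IH _ hgsub g hg rfl
        obtain ⟨n₂, v₂, hi₂, hp₂, ho₂, hs₂⟩ := IH _ hfsub (e - g) hfe rfl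
        have hsub₁ : ∀ i, v₁ i * g = v₁ i := by
          intro i
          rw [← hs₁, Finset.mul_sum]
          rw [Finset.sum_eq_single i (fun j _ hj => ho₁ i j (Ne.symm hj)) (by simp)]
          exact hi₁ i
        have hsub₂ : ∀ j, v₂ j * (e - g) = v₂ j := by
          intro j
          rw [← hs₂, Finset.mul_sum]
          rw [Finset.sum_eq_single j (fun i _ hi => ho₂ j i (Ne.symm hi)) (by simp)]
          exact hi₂ j
        have hcross : ∀ i j, v₁ i * v₂ j = 0 := by
          intro i j
          have hc₂ := hcentral (v₂ j) (hi₂ j)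
          have h1 : (e - g) * v₂ j = v₂ j := by rw [← hc₂ (e - g), hsub₂ j]
          have hgf : g * (e - g) = 0 := by rw [mul_sub, hge', hg, sub_self]
          calc v₁ i * v₂ j = (v₁ i * g) * ((e - g) * v₂ j) := by rw [hsub₁ i, h1]
            _ = v₁ i * (g * (e - g)) * v₂ j := by rw [mul_assoc, ← mul_assoc g, ← mul_assoc]
            _ = 0 := by rw [hgf, mul_zero, zero_mul]
        refine ⟨n₁ + n₂, Fin.append v₁ v₂, ?_, ?_, ?_, ?_⟩
        · intro i
          refine Fin.addCases (fun i => ?_) (fun i => ?_) i <;>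
            simp only [Fin.append_left, Fin.append_right]
          · exact hi₁ i
          · exact hi₂ i
        · intro i
          refine Fin.addCases (fun i => ?_) (fun i => ?_) i <;>
            simp only [Fin.append_left, Fin.append_right]
          · exact hp₁ i
          · exact hp₂ i
        · intro i j
          refine Fin.addCases (fun i' => ?_) (fun i' => ?_) i <;>
            refine Fin.addCases (fun j' => ?_) (fun j' => ?_) j <;>
              intro hij <;> simp only [Fin.append_left, Fin.append_right]
          · exact ho₁ i' j' (fun h => hij (congrArg _ h))
          · exact hcross i' j'
          · rw [← hcentral (v₁ j') (hi₁ j') (v₂ i')]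
            exact hcross j' i'
          · exact ho₂ i' j' (fun h => hij (congrArg _ h))
        · rw [Fin.sum_univ_add]
          simp only [Fin.append_left, Fin.append_right]
          rw [hs₁, hs₂]
          abel
  intro e he
  exact H (Submodule.span R {e}) e he rfl

/-- The `i`-th component of an ideal of a finite product ring. -/
def projIdeal {n : ℕ} (S : Fin n → Type) [∀ i, Ring (S i)] [DecidableEq (Fin n)] (i : Fin n)
    (I : Submodule (∀ j, S j) (∀ j, S j)) : Submodule (S i) (S i) where
  carrier := (fun x : ∀ j, S j => x i) '' I
  zero_mem' := ⟨0, I.zero_mem, rfl⟩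
  add_mem' := by
    rintro a b ⟨x, hx, rfl⟩ ⟨y, hy, rfl⟩
    exact ⟨x + y, I.add_mem hx hy, rfl⟩
  smul_mem' := by
    rintro s a ⟨y, hy, rfl⟩
    refine ⟨Pi.single i s * y, I.smul_mem (Pi.single i s) hy, ?_⟩
    show (Pi.single i s * y) i = s • y i
    rw [Pi.mul_apply, Pi.single_eq_same, smul_eq_mul]

theorem isArtinianRing_pi' {n : ℕ} (S : Fin n → Type) [inst : ∀ i, Ring (S i)]
    (h : ∀ i, IsArtinian (S i) (S i)) : IsArtinian (∀ i, S i) (∀ i, S i) := by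
  classical
  rw [← monotone_stabilizes_iff_artinian]
  intro f
  have proj_mem : ∀ (i : Fin n) (I : Submodule (∀ j, S j) (∀ j, S j)) (x : ∀ j, S j),
      x ∈ I → x i ∈ projIdeal S i I := fun i I x hx => ⟨x, hx, rfl⟩
  set g : ∀ _ : Fin n, ℕ →o (Submodule (S _) (S _))ᵒᵈ := fun i =>
    ⟨fun k => OrderDual.toDual (projIdeal S i (OrderDual.ofDual (f k))), by
      intro a b hab
      have hle : (OrderDual.ofDual (f b) : Submodule _ _) ≤ OrderDual.ofDual (f a) :=
        f.monotone hab
      rintro x ⟨y, hy, rfl⟩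
      exact ⟨y, hle hy, rfl⟩⟩ with hgdef
  choose N hN using fun i => (@IsArtinian.monotone_stabilizes _ _ _ _ _ (h i) (g i))
  refine ⟨Finset.univ.sup N, fun m hm => ?_⟩
  have hg : ∀ i, projIdeal S i (OrderDual.ofDual (f (Finset.univ.sup N))) =
      projIdeal S i (OrderDual.ofDual (f m)) := by
    intro i
    have h1 := hN i (Finset.univ.sup N) (Finset.le_sup (Finset.mem_univ i))
    have h2 := hN i m (le_trans (Finset.le_sup (Finset.mem_univ i)) hm)
    have h3 := h1.symm.trans h2
    rw [hgdef] at h3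
    exact OrderDual.toDual.injective h3
  apply le_antisymm
  · exact f.monotone hm
  · intro x hx
    have hxi : ∀ i, x i ∈ projIdeal S i (OrderDual.ofDual (f m)) := by
      intro i
      rw [← hg i]
      exact proj_mem i _ x hx
    choose y hy hyx using fun i => hxi i
    have hx' : x = ∑ j, Pi.single j (1 : S j) * y j := by
      funext i
      rw [Finset.sum_apply]
      rw [Finset.sum_eq_single i ?_ ?_]
      · rw [Pi.mul_apply, Pi.single_eq_same, one_mul]
        exact (hyx i).symm
      · intro j _ hj
        show (Pi.single j (1 : S j) * y j) i = 0
        rw [Pi.mul_apply, Pi.single_eq_of_ne (Ne.symm hj), zero_mul]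
      · intro hmem
        exact absurd (Finset.mem_univ i) hmem
    rw [hx']
    exact Submodule.sum_mem _ fun j _ =>
      (OrderDual.ofDual (f m) : Submodule _ _).smul_mem (Pi.single j 1) (hy j)

def piOp {n : ℕ} (S : Fin n → Type) [∀ i, Ring (S i)] :
    (∀ i, S i)ᵐᵒᵖ ≃+* ∀ i, (S i)ᵐᵒᵖ where
  toFun x i := MulOpposite.op (MulOpposite.unop x i)
  invFun x := MulOpposite.op (fun i => MulOpposite.unop (x i))
  left_inv _ := rfl
  right_inv _ := rfl
  map_add' _ _ := rfl
  map_mul' _ _ := rfl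

end Toolkit

/-- Let `R` be a ring in which every idempotent is central and which is a principal ideal
ring (every right ideal and every left ideal is generated by one element).  Then `R` is
endoartinian (left and right) iff `R` is isomorphic to a finite product of artinian
uniserial rings (rings that are left and right artinian whose right ideals and left
ideals are each totally ordered by inclusion). -/
theorem isEndoartinian_iff_product_of_artinian_uniserial (R : Type) [Ring R]
    (hcentral : ∀ e : R, e * e = e → ∀ r : R, e * r = r * e)
    (hPIR_right : ∀ I : Submodule Rᵐᵒᵖ R, ∃ a : R, I = Submodule.span Rᵐᵒᵖ {a})
    (hPIR_left : ∀ I : Submodule R R, ∃ a : R, I = Submodule.span R {a}) :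
    (IsEndoartinian R R ∧ IsEndoartinian Rᵐᵒᵖ R) ↔
      ∃ (n : ℕ) (S : Fin n → Type) (inst : (i : Fin n) → Ring (S i)),
        (∀ i, letI := inst i;
          IsArtinian (S i) (S i) ∧ IsArtinian (S i)ᵐᵒᵖ (S i) ∧
          (∀ I J : Submodule (S i)ᵐᵒᵖ (S i), I ≤ J ∨ J ≤ I) ∧
          (∀ I J : Submodule (S i) (S i), I ≤ J ∨ J ≤ I)) ∧
        (letI := inst; Nonempty (R ≃+* ((i : Fin n) → S i))) := by
  constructor
  · rintro ⟨hEL, hER⟩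
    have hAL : IsArtinian R R := isArtinian_of_isEndoartinian hEL hPIR_left
    have hPop : ∀ I : Submodule Rᵐᵒᵖ Rᵐᵒᵖ, ∃ a, I = Submodule.span Rᵐᵒᵖ {a} :=
      pir_congr (opLE R) hPIR_right
    have hAR : IsArtinian Rᵐᵒᵖ Rᵐᵒᵖ :=
      isArtinian_of_isEndoartinian (isEndoartinian_congr (opLE R) hER) hPop
    haveI := hAL
    obtain ⟨n, v, hvi, hvp, hvo, hvs⟩ := exists_primitive_decomposition hcentral 1 (one_mul 1)
    have hcv : ∀ i, ∀ r : R, v i * r = r * v i := fun i => hcentral (v i) (hvi i)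
    set c : Fin n → RingCon R := fun i => conOf (v i) (hvi i) (hcv i) with hcdef
    set Q : Fin n → Type := fun i => (c i).Quotient with hQdef
    have hsurj : ∀ i, Function.Surjective ((c i).mk') := fun i => conOf_mk'_surjective _ _ _
    have heq : ∀ i (x y : R), (c i).mk' x = (c i).mk' y ↔ v i * x = v i * y :=
      fun i => conOf_eq _ _ _
    set φ : R →+* ∀ i, Q i := Pi.ringHom (fun i => (c i).mk') with hφdef
    have hφinj : Function.Injective φ := by
      intro x y h
      have hvx : ∀ i, v i * x = v i * y := fun i => (heq i x y).mp (congrFun h i)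
      calc x = (∑ i, v i) * x := by rw [hvs, one_mul]
        _ = ∑ i, v i * x := by rw [Finset.sum_mul]
        _ = ∑ i, v i * y := Finset.sum_congr rfl (fun i _ => hvx i)
        _ = (∑ i, v i) * y := by rw [Finset.sum_mul]
        _ = y := by rw [hvs, one_mul]
    have hφsurj : Function.Surjective φ := by
      intro q
      choose x hx using fun i => hsurj i (q i)
      refine ⟨∑ j, v j * x j, ?_⟩
      funext i
      have hkey : v i * (∑ j, v j * x j) = v i * x i := by
        rw [Finset.mul_sum]
        rw [Finset.sum_eq_single i ?_ ?_]
        · rw [← mul_assoc, hvi i]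
        · intro j _ hj
          rw [← mul_assoc, hvo i j (Ne.symm hj), zero_mul]
        · intro hmem
          exact absurd (Finset.mem_univ i) hmem
      calc φ (∑ j, v j * x j) i = (c i).mk' (∑ j, v j * x j) := rfl
        _ = (c i).mk' (x i) := (heq i _ _).mpr hkey
        _ = q i := hx i
    have ψ : R ≃+* ∀ i, Q i := RingEquiv.ofBijective φ ⟨hφinj, hφsurj⟩
    refine ⟨n, Q, fun i => inferInstance, ?_, ⟨ψ⟩⟩
    intro i
    haveI : IsArtinianRing R := hAL
    haveI : IsArtinianRing Rᵐᵒᵖ := hAR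
    haveI hALi : IsArtinianRing (Q i) := Function.Surjective.isArtinianRing (hsurj i)
    haveI hARi : IsArtinianRing (Q i)ᵐᵒᵖ :=
      Function.Surjective.isArtinianRing (op_hom_surjective _ (hsurj i))
    have htrivQ : ∀ q : Q i, q * q = q → q = 0 ∨ q = 1 := by
      intro q hq
      obtain ⟨x, rfl⟩ := hsurj i q
      have hq' : v i * (x * x) = v i * x := by
        have : (c i).mk' (x * x) = (c i).mk' x := by rw [map_mul, hq]
        exact (heq i _ _).mp this
      have hyy : (v i * x) * (v i * x) = v i * x := by
        rw [← central_idem_mul (v i) (hvi i) (hcv i), hq']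
      have hvy : v i * (v i * x) = v i * x := by rw [← mul_assoc, hvi i]
      rcases hvp i (v i * x) hyy hvy with h0 | h1
      · left
        have : (c i).mk' x = (c i).mk' 0 := (heq i _ _).mpr (by rw [mul_zero, h0])
        rw [this, map_zero]
      · right
        have : (c i).mk' x = (c i).mk' 1 := (heq i _ _).mpr (by rw [mul_one, h1])
        rw [this, map_one]
    have htrivQop : ∀ q : (Q i)ᵐᵒᵖ, q * q = q → q = 0 ∨ q = 1 := by
      intro q hq
      have h1 : unop q * unop q = unop q := by
        have := congrArg unop hq
        rwa [unop_mul] at this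
      rcases htrivQ _ h1 with h | h
      · left; exact unop_injective (by rw [h, unop_zero])
      · right; exact unop_injective (by rw [h, unop_one])
    have hPQ : ∀ I : Submodule (Q i) (Q i), ∃ a, I = Submodule.span (Q i) {a} :=
      pir_of_surjective ((c i).mk') (hsurj i) hPIR_left
    have hPQop : ∀ I : Submodule (Q i)ᵐᵒᵖ (Q i)ᵐᵒᵖ, ∃ a, I = Submodule.span (Q i)ᵐᵒᵖ {a} :=
      pir_of_surjective (RingHom.op ((c i).mk')) (op_hom_surjective _ (hsurj i)) hPop
    refine ⟨hALi, isArtinian_of_linearEquiv (opLE (Q i)).symm, ?_, ?_⟩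
    · intro I J
      have hchainop := uniserial_of_artinian_pir htrivQop hARi hPQop
      set o := Submodule.orderIsoMapComap (opLE (Q i)) with ho
      rcases hchainop (o I) (o J) with h | h
      · left; exact o.le_iff_le.mp h
      · right; exact o.le_iff_le.mp h
    · exact uniserial_of_artinian_pir htrivQ hALi hPQ
  · rintro ⟨n, S, inst, hprops, ⟨ψ⟩⟩
    have hart : ∀ i, IsArtinian (S i) (S i) := fun i => (hprops i).1
    have hartop : ∀ i, IsArtinian (S i)ᵐᵒᵖ (S i) := fun i => (hprops i).2.1
    haveI hPart : IsArtinianRing (∀ i, S i) := isArtinianRing_pi' S hart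
    haveI hRart : IsArtinianRing R := Function.Surjective.isArtinianRing ψ.symm.surjective
    have hartop' : ∀ i, IsArtinian (S i)ᵐᵒᵖ (S i)ᵐᵒᵖ := fun i => by
      haveI := hartop i
      exact isArtinian_of_linearEquiv (opLE (S i))
    haveI hPartop : IsArtinianRing (∀ i, (S i)ᵐᵒᵖ) := isArtinianRing_pi' _ hartop'
    have χ : (∀ i, (S i)ᵐᵒᵖ) ≃+* Rᵐᵒᵖ := (piOp S).symm.trans (RingEquiv.op ψ).symm
    haveI hRartop : IsArtinianRing Rᵐᵒᵖ := Function.Surjective.isArtinianRing χ.surjective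
    haveI : IsArtinian Rᵐᵒᵖ R := isArtinian_of_linearEquiv (opLE R).symm
    exact ⟨isEndoartinian_of_isArtinian R R, isEndoartinian_of_isArtinian Rᵐᵒᵖ R⟩
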